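/- Let Σ_{n≥0} κ_n q^n be the unique formal power series over ℝ satisfying q·f² = (q² + q − 1)·f + 1. For every real q with 0 < q < R_*, the series Σ_{n≥0} κ_n q^n converges and its sum equals (q² + q − 1 + √((q² + 3q + 1)(q² − q + 1))) / (2q). -/

import Mathlib

/-- `R_* = (3 − √5)/2`. -/
noncomputable def Rstar : ℝ := (3 - Real.sqrt 5) / 2

open scoped NNReal ENNReal

noncomputable def Sstar : ℝ := (3 + Real.sqrt 5) / 2

lemma sqrt5_sq : Real.sqrt 5 ^ 2 = 5 := Real.sq_sqrt (by norm_num)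

lemma sqrt5_gt : 2 < Real.sqrt 5 := by
  nlinarith [sqrt5_sq, Real.sqrt_nonneg 5]

lemma sqrt5_lt : Real.sqrt 5 < 9/4 := by
  nlinarith [sqrt5_sq, Real.sqrt_nonneg 5]

lemma Rstar_pos : 0 < Rstar := by unfold Rstar; nlinarith [sqrt5_lt]

lemma Rstar_lt_half : Rstar < 1/2 := by unfold Rstar; nlinarith [sqrt5_gt]

lemma RS_sum : Rstar + Sstar = 3 := by unfold Rstar Sstar; ring

lemma RS_prod : Rstar * Sstar = 1 := by
  unfold Rstar Sstar; nlinarith [sqrt5_sq]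

lemma Rstar_quad : Rstar ^ 2 + Rstar < 1 := by
  unfold Rstar; nlinarith [sqrt5_sq, sqrt5_gt]

/-- Algebraic uniqueness of solutions of the quadratic functional equation. -/
lemma powerSeries_quadratic_unique (f g : PowerSeries ℂ)
    (hf : PowerSeries.X * f ^ 2 = (PowerSeries.X ^ 2 + PowerSeries.X - 1) * f + 1)
    (hg : PowerSeries.X * g ^ 2 = (PowerSeries.X ^ 2 + PowerSeries.X - 1) * g + 1) :
    f = g := by
  have key : (f - g) * (PowerSeries.X * (f + g) - (PowerSeries.X ^ 2 + PowerSeries.X - 1)) = 0 := by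
    linear_combination hf - hg
  rcases mul_eq_zero.mp key with h | h
  · exact sub_eq_zero.mp h
  · exfalso
    have h0 := congrArg (PowerSeries.constantCoeff) h
    simp [map_sub, map_mul, map_add, map_pow] at h0

/-- Uniqueness of coefficients of a convergent power series summing to zero. -/
lemma coeff_eq_zero_of_hasSum_zero {c : ℕ → ℂ} {ρ : ℝ} (hρ : 0 < ρ)
    (hs : Summable fun n => ‖c n‖ * ρ ^ n)
    (h0 : ∀ z : ℂ, ‖z‖ < ρ → HasSum (fun n => c n * z ^ n) 0) : ∀ n, c n = 0 := by
  have hball : HasFPowerSeriesOnBall (fun _ => (0 : ℂ))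
      (FormalMultilinearSeries.ofScalars ℂ c) 0 (ENNReal.ofReal ρ) := by
    constructor
    · have hsum' : Summable fun n => ‖FormalMultilinearSeries.ofScalars ℂ c n‖ *
          (ρ.toNNReal : ℝ) ^ n := by
        have he : (fun n => ‖FormalMultilinearSeries.ofScalars ℂ c n‖ * (ρ.toNNReal : ℝ) ^ n)
            = fun n => ‖c n‖ * ρ ^ n := by
          funext n
          rw [FormalMultilinearSeries.ofScalars_norm, Real.coe_toNNReal _ hρ.le]
        rw [he]; exact hs
      have := FormalMultilinearSeries.le_radius_of_summable _ hsum'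
      simpa [ENNReal.ofReal] using this
    · simpa using hρ
    · intro y hy
      have h'y : ‖y‖ < ρ := by
        rw [EMetric.mem_ball, edist_zero_right] at hy
        have hy2 : (‖y‖₊ : NNReal) < ρ.toNNReal := by
          rw [show ENNReal.ofReal ρ = ((ρ.toNNReal : NNReal) : ENNReal) from rfl] at hy
          exact_mod_cast hy
        calc ‖y‖ = (‖y‖₊ : ℝ) := by simp
        _ < (ρ.toNNReal : ℝ) := by exact_mod_cast hy2
        _ ≤ ρ := le_of_eq (Real.coe_toNNReal _ hρ.le)
      have hgoal := h0 y h'y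
      have he : (fun n => FormalMultilinearSeries.ofScalars ℂ c n fun _ => y)
          = fun n => c n * y ^ n := by
        funext n
        rw [FormalMultilinearSeries.ofScalars_apply_eq, smul_eq_mul]
      rw [he]
      exact hgoal
  have hz := hball.hasFPowerSeriesAt.eq_zero
  intro n
  have := congrFun hz n
  have h2 : c n • ContinuousMultilinearMap.mkPiAlgebraFin ℂ n ℂ = 0 := this
  by_contra hc
  have := (FormalMultilinearSeries.ofScalars_eq_zero (𝕜 := ℂ) ℂ n).mp (by
    simpa [FormalMultilinearSeries.ofScalars] using h2)
  exact hc this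

open Complex in
/-- Holomorphic branch of the square root of `(z² + 3z + 1)(z² − z + 1)` on the disk. -/
noncomputable def sqD (z : ℂ) : ℂ :=
  (z + (Rstar : ℂ)) ^ (1/2 : ℂ) * ((z + (Sstar : ℂ)) ^ (1/2 : ℂ) * (z ^ 2 - z + 1) ^ (1/2 : ℂ))

noncomputable def Gc (z : ℂ) : ℂ := 2 / (sqD z - (z ^ 2 + z - 1))

lemma re1 {z : ℂ} (hz : ‖z‖ < Rstar) : 0 < (z + (Rstar : ℂ)).re := by
  have h := abs_le.mp (Complex.abs_re_le_norm z)
  simp only [Complex.add_re, Complex.ofReal_re]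
  have : ‖z‖ = ‖z‖ := rfl
  nlinarith [h.1, this ▸ hz]

lemma re2 {z : ℂ} (hz : ‖z‖ < Rstar) : 0 < (z + (Sstar : ℂ)).re := by
  have h := abs_le.mp (Complex.abs_re_le_norm z)
  have : ‖z‖ = ‖z‖ := rfl
  have hRS : Rstar < Sstar := by
    unfold Rstar Sstar; nlinarith [sqrt5_gt]
  simp only [Complex.add_re, Complex.ofReal_re]
  nlinarith [h.1, this ▸ hz]

lemma re3 {z : ℂ} (hz : ‖z‖ < Rstar) : 0 < (z ^ 2 - z + 1).re := by
  have h := abs_le.mp (Complex.abs_re_le_norm z)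
  have hn : ‖z‖ = ‖z‖ := rfl
  have habs : z.re ^ 2 + z.im ^ 2 < Rstar ^ 2 := by
    have := Complex.sq_norm z
    rw [Complex.normSq_apply] at this
    nlinarith [hn ▸ hz, norm_nonneg z, Rstar_pos]
  have hre : (z ^ 2 - z + 1).re = z.re ^ 2 - z.im ^ 2 - z.re + 1 := by
    simp only [Complex.add_re, Complex.sub_re, Complex.one_re, pow_two, Complex.mul_re]
  rw [hre]
  nlinarith [h.1, h.2, hn ▸ hz, Rstar_quad, sq_nonneg z.re, Rstar_pos]

lemma half_cpow_sq {w : ℂ} (hw : w ≠ 0) : (w ^ (1/2 : ℂ)) ^ 2 = w := by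
  rw [sq, ← Complex.cpow_add _ _ hw]
  norm_num

lemma ne_zero_of_re_pos' {w : ℂ} (hw : 0 < w.re) : w ≠ 0 := by
  intro h; rw [h] at hw; simp at hw

lemma sqD_sq {z : ℂ} (hz : ‖z‖ < Rstar) : sqD z ^ 2 = (z ^ 2 + z - 1) ^ 2 + 4 * z := by
  have h1 := ne_zero_of_re_pos' (re1 hz)
  have h2 := ne_zero_of_re_pos' (re2 hz)
  have h3 := ne_zero_of_re_pos' (re3 hz)
  have e1 : sqD z ^ 2 = (z + (Rstar : ℂ)) * ((z + (Sstar : ℂ)) * (z ^ 2 - z + 1)) := by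
    rw [sqD, mul_pow, mul_pow, half_cpow_sq h1, half_cpow_sq h2, half_cpow_sq h3]
  rw [e1]
  have hsum : (Rstar : ℂ) + (Sstar : ℂ) = 3 := by
    rw [← Complex.ofReal_add, RS_sum]; norm_num
  have hprod : (Rstar : ℂ) * (Sstar : ℂ) = 1 := by
    rw [← Complex.ofReal_mul, RS_prod]; norm_num
  linear_combination (z * (z ^ 2 - z + 1)) * hsum + (z ^ 2 - z + 1) * hprod

lemma sqD_real {q : ℝ} (h0 : 0 ≤ q) :
    sqD (q : ℂ) = ((Real.sqrt ((q ^ 2 + 3 * q + 1) * (q ^ 2 - q + 1)) : ℝ) : ℂ) := by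
  have hR : (0 : ℝ) ≤ q + Rstar := by linarith [Rstar_pos]
  have hS : (0 : ℝ) ≤ q + Sstar := by
    have : (0:ℝ) < Sstar := by unfold Sstar; nlinarith [sqrt5_gt]
    linarith
  have hq : (0 : ℝ) ≤ q ^ 2 - q + 1 := by nlinarith [sq_nonneg (q - 1/2)]
  have c1 : ((q : ℂ) + (Rstar : ℂ)) = ((q + Rstar : ℝ) : ℂ) := by push_cast; ring
  have c2 : ((q : ℂ) + (Sstar : ℂ)) = ((q + Sstar : ℝ) : ℂ) := by push_cast; ring
  have c3 : ((q : ℂ) ^ 2 - (q : ℂ) + 1) = ((q ^ 2 - q + 1 : ℝ) : ℂ) := by push_cast; ring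
  have half : ((1/2 : ℂ)) = ((1/2 : ℝ) : ℂ) := by norm_num
  rw [sqD, c1, c2, c3, half,
    ← Complex.ofReal_cpow hR, ← Complex.ofReal_cpow hS, ← Complex.ofReal_cpow hq,
    ← Complex.ofReal_mul, ← Complex.ofReal_mul]
  congr 1
  rw [← Real.sqrt_eq_rpow, ← Real.sqrt_eq_rpow, ← Real.sqrt_eq_rpow,
    ← Real.sqrt_mul hS, ← Real.sqrt_mul hR]
  congr 1
  linear_combination (q * (q ^ 2 - q + 1)) * RS_sum + (q ^ 2 - q + 1) * RS_prod

lemma denom_ne {z : ℂ} (hz : ‖z‖ < Rstar) : sqD z - (z ^ 2 + z - 1) ≠ 0 := by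
  intro h
  have heq : sqD z = z ^ 2 + z - 1 := sub_eq_zero.mp h
  have hsq := sqD_sq hz
  rw [heq] at hsq
  have hz0 : z = 0 := by
    have h4 : (4 : ℂ) * z = 0 := by linear_combination -hsq
    simpa using h4
  subst hz0
  have h1 : sqD (0 : ℂ) = 1 := by
    have := sqD_real (le_refl (0:ℝ))
    norm_num at this
    simpa using this
  rw [h1] at heq
  norm_num at heq

lemma Gc_quadratic {z : ℂ} (hz : ‖z‖ < Rstar) :
    z * Gc z ^ 2 = (z ^ 2 + z - 1) * Gc z + 1 := by
  have hne := denom_ne hz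
  set S := sqD z with hS
  have hsq : S ^ 2 = (z ^ 2 + z - 1) ^ 2 + 4 * z := sqD_sq hz
  rw [Gc, ← hS]
  have hne' : S - (z * (z + 1) - 1) ≠ 0 := by rwa [show z * (z + 1) - 1 = z ^ 2 + z - 1 by ring]
  field_simp
  linear_combination (-1 : ℂ) * hsq

lemma Gc_real {q : ℝ} (h0 : 0 < q) (h1 : q < Rstar) :
    Gc (q : ℂ) = (((q ^ 2 + q - 1 + Real.sqrt ((q ^ 2 + 3 * q + 1) * (q ^ 2 - q + 1))) /
      (2 * q) : ℝ) : ℂ) := by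
  have hqn : ‖(q : ℂ)‖ < Rstar := by
    rw [Complex.norm_real, Real.norm_eq_abs]
    rwa [abs_of_pos h0]
  have hD0 : (0:ℝ) ≤ (q ^ 2 + 3 * q + 1) * (q ^ 2 - q + 1) := by
    nlinarith [sq_nonneg (q - 1/2), sq_nonneg q]
  set D := (q ^ 2 + 3 * q + 1) * (q ^ 2 - q + 1) with hD
  set P := q ^ 2 + q - 1 with hP
  have hsqD : Real.sqrt D ^ 2 = D := Real.sq_sqrt hD0
  have hden : Real.sqrt D - P > 0 := by
    have hPneg : P < 0 := by
      rw [hP]; nlinarith [Rstar_quad, Rstar_pos]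
    nlinarith [Real.sqrt_nonneg D]
  have hdenC : sqD (q:ℂ) - ((q:ℂ) ^ 2 + (q:ℂ) - 1) = ((Real.sqrt D - P : ℝ) : ℂ) := by
    rw [sqD_real h0.le]; push_cast [hD, hP]; ring
  rw [Gc, hdenC]
  rw [show (2 : ℂ) = ((2:ℝ):ℂ) by norm_num, ← Complex.ofReal_div]
  congr 1
  rw [div_eq_div_iff (ne_of_gt hden) (by positivity)]
  have hDP : D - P ^ 2 = 4 * q := by rw [hD, hP]; ring
  linear_combination (-1 : ℝ) * hsqD - hDP

lemma Gc_diffAt {z : ℂ} (hz : ‖z‖ < Rstar) : DifferentiableAt ℂ Gc z := by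
  have d1 : DifferentiableAt ℂ (fun w : ℂ => (w + (Rstar : ℂ)) ^ (1/2 : ℂ)) z := by
    apply DifferentiableAt.cpow (by fun_prop) (differentiableAt_const _)
    exact Complex.mem_slitPlane_iff.mpr (Or.inl (re1 hz))
  have d2 : DifferentiableAt ℂ (fun w : ℂ => (w + (Sstar : ℂ)) ^ (1/2 : ℂ)) z := by
    apply DifferentiableAt.cpow (by fun_prop) (differentiableAt_const _)
    exact Complex.mem_slitPlane_iff.mpr (Or.inl (re2 hz))
  have d3 : DifferentiableAt ℂ (fun w : ℂ => (w ^ 2 - w + 1) ^ (1/2 : ℂ)) z := by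
    apply DifferentiableAt.cpow (by fun_prop) (differentiableAt_const _)
    exact Complex.mem_slitPlane_iff.mpr (Or.inl (re3 hz))
  have dS : DifferentiableAt ℂ sqD z := d1.mul (d2.mul d3)
  have dDen : DifferentiableAt ℂ (fun w => sqD w - (w ^ 2 + w - 1)) z := by
    apply dS.sub
    fun_prop
  exact (differentiableAt_const (2:ℂ)).div dDen (denom_ne hz)

lemma Gc_diffOn {r : ℝ} (hr : r < Rstar) :
    DifferentiableOn ℂ Gc (Metric.closedBall 0 r) := fun z hz =>
  (Gc_diffAt (lt_of_le_of_lt (by simpa [dist_zero_right] using Metric.mem_closedBall.mp hz) hr)).differentiableWithinAt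

lemma hasSum_shift {g : ℕ → ℂ} {z w : ℂ} (h : HasSum (fun n => g n * z ^ n) w) :
    HasSum (fun n => (if n = 0 then 0 else g (n - 1)) * z ^ n) (z * w) := by
  have e : (fun n : ℕ => (if n + 1 = 0 then (0:ℂ) else g (n + 1 - 1)) * z ^ (n + 1))
      = fun n : ℕ => z * (g n * z ^ n) := by
    funext n
    rw [if_neg n.succ_ne_zero, Nat.add_sub_cancel, pow_succ]
    ring
  have h2 : HasSum (fun n : ℕ => (if n + 1 = 0 then (0:ℂ) else g (n + 1 - 1)) * z ^ (n + 1))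
      (z * w) := by
    rw [e]; exact h.mul_left z
  have h3 := (hasSum_nat_add_iff
    (f := fun n : ℕ => (if n = 0 then (0:ℂ) else g (n - 1)) * z ^ n) 1).mp h2
  simpa using h3

lemma summable_shift {g : ℕ → ℝ} {ρ : ℝ} (h : Summable fun n => g n * ρ ^ n) :
    Summable fun n => (if n = 0 then 0 else g (n - 1)) * ρ ^ n := by
  rw [← summable_nat_add_iff 1]
  have e : (fun n : ℕ => (if n + 1 = 0 then (0:ℝ) else g (n + 1 - 1)) * ρ ^ (n + 1))
      = fun n : ℕ => ρ * (g n * ρ ^ n) := by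
    funext n
    rw [if_neg n.succ_ne_zero, Nat.add_sub_cancel, pow_succ]
    ring
  rw [e]
  exact h.mul_left ρ

lemma summable_norm_sub_mul_pow {u v : ℕ → ℂ} {ρ : ℝ} (hρ : 0 ≤ ρ)
    (hu : Summable fun n => ‖u n‖ * ρ ^ n) (hv : Summable fun n => ‖v n‖ * ρ ^ n) :
    Summable fun n => ‖u n - v n‖ * ρ ^ n := by
  refine (hu.add hv).of_nonneg_of_le (fun n => by positivity) (fun n => ?_)
  have h1 : ‖u n - v n‖ ≤ ‖u n‖ + ‖v n‖ := norm_sub_le _ _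
  have h2 : (0:ℝ) ≤ ρ ^ n := pow_nonneg hρ n
  nlinarith

lemma summable_norm_add_mul_pow {u v : ℕ → ℂ} {ρ : ℝ} (hρ : 0 ≤ ρ)
    (hu : Summable fun n => ‖u n‖ * ρ ^ n) (hv : Summable fun n => ‖v n‖ * ρ ^ n) :
    Summable fun n => ‖u n + v n‖ * ρ ^ n := by
  refine (hu.add hv).of_nonneg_of_le (fun n => by positivity) (fun n => ?_)
  have h1 : ‖u n + v n‖ ≤ ‖u n‖ + ‖v n‖ := norm_add_le _ _
  have h2 : (0:ℝ) ≤ ρ ^ n := pow_nonneg hρ n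
  nlinarith

lemma coeff_X_mul' (φ : PowerSeries ℂ) (n : ℕ) :
    PowerSeries.coeff n (PowerSeries.X * φ)
      = if n = 0 then 0 else PowerSeries.coeff (n - 1) φ := by
  cases n with
  | zero =>
    simp [PowerSeries.coeff_zero_eq_constantCoeff, map_mul]
  | succ m =>
    simp [PowerSeries.coeff_succ_X_mul]

theorem qGoldenRatio_sum_formula
    (f : PowerSeries ℝ)
    (hf : PowerSeries.X * f ^ 2 = (PowerSeries.X ^ 2 + PowerSeries.X - 1) * f + 1) :
    ∀ q : ℝ, 0 < q → q < Rstar →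
      HasSum (fun n : ℕ => PowerSeries.coeff n f * q ^ n)
        ((q ^ 2 + q - 1 + Real.sqrt ((q ^ 2 + 3 * q + 1) * (q ^ 2 - q + 1))) / (2 * q)) := by
  intro q hq0 hqR
  set r : ℝ := (q + Rstar) / 2 with hrdef
  have hr0 : 0 < r := by rw [hrdef]; linarith [Rstar_pos]
  have hqr : q < r := by rw [hrdef]; linarith
  have hrR : r < Rstar := by rw [hrdef]; linarith
  have hcoe : ((r.toNNReal : ℝ≥0) : ℝ) = r := Real.coe_toNNReal _ hr0.le
  have hdiff : DifferentiableOn ℂ Gc (Metric.closedBall 0 (r.toNNReal : ℝ)) := by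
    rw [hcoe]; exact Gc_diffOn hrR
  have hball := hdiff.hasFPowerSeriesOnBall (Real.toNNReal_pos.mpr hr0)
  set p : FormalMultilinearSeries ℂ ℂ ℂ := cauchyPowerSeries Gc 0 (r.toNNReal : ℝ) with hpdef
  set a : ℕ → ℂ := fun n => p.coeff n with hadef
  have hsum : ∀ z : ℂ, ‖z‖ < r → HasSum (fun n => a n * z ^ n) (Gc z) := by
    intro z hz
    have hmem : z ∈ Metric.eball (0 : ℂ) (r.toNNReal : ℝ≥0∞) := by
      rw [Metric.mem_eball, edist_zero_right]
      exact_mod_cast ENNReal.coe_lt_coe.mpr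
        (by rw [← NNReal.coe_lt_coe, coe_nnnorm, hcoe]; exact hz)
    have hz' := hball.hasSum hmem
    have e : (fun n => p n fun _ => z) = fun n => a n * z ^ n := by
      funext n
      rw [FormalMultilinearSeries.apply_eq_pow_smul_coeff, smul_eq_mul, mul_comm]
    rw [e, zero_add] at hz'
    exact hz'
  set ρ : ℝ := r / 2 with hρdef
  have hρ0 : 0 < ρ := by rw [hρdef]; linarith
  have hρr : ρ < r := by rw [hρdef]; linarith
  have hanorm : Summable fun n => ‖a n‖ * ρ ^ n := by
    have hlt : ((ρ.toNNReal : ℝ≥0) : ℝ≥0∞) < p.radius := by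
      refine lt_of_lt_of_le ?_ hball.r_le
      exact ENNReal.coe_lt_coe.mpr
        (by rw [← NNReal.coe_lt_coe, hcoe, Real.coe_toNNReal _ hρ0.le]; exact hρr)
    have hs := p.summable_norm_mul_pow hlt
    have e : (fun n => ‖p n‖ * ((ρ.toNNReal : ℝ≥0) : ℝ) ^ n) = fun n => ‖a n‖ * ρ ^ n := by
      funext n
      rw [FormalMultilinearSeries.norm_apply_eq_norm_coef, Real.coe_toNNReal _ hρ0.le]
    rwa [e] at hs
  have habs : ∀ z : ℂ, ‖z‖ ≤ ρ → Summable fun n => ‖a n * z ^ n‖ := by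
    intro z hz
    refine hanorm.of_nonneg_of_le (fun n => norm_nonneg _) (fun n => ?_)
    rw [norm_mul, norm_pow]
    have h1 : ‖z‖ ^ n ≤ ρ ^ n := pow_le_pow_left₀ (norm_nonneg z) hz n
    exact mul_le_mul_of_nonneg_left h1 (norm_nonneg _)
  set A : PowerSeries ℂ := PowerSeries.mk a with hAdef
  have hcA : ∀ n, PowerSeries.coeff n A = a n := fun n => PowerSeries.coeff_mk n a
  -- Cauchy products
  have hprodsum : ∀ z : ℂ, ‖z‖ ≤ ρ → ∀ w : ℂ, HasSum (fun n => a n * z ^ n) w →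
      HasSum (fun n => PowerSeries.coeff n (A * A) * z ^ n) (w * w) := by
    intro z hz w hw
    have hf1 : Summable fun n => ‖a n * z ^ n‖ := habs z hz
    have hsummable : Summable fun n : ℕ => ∑ kl ∈ Finset.HasAntidiagonal.antidiagonal n,
        (a kl.1 * z ^ kl.1) * (a kl.2 * z ^ kl.2) :=
      (summable_norm_sum_mul_antidiagonal_of_summable_norm hf1 hf1).of_norm
    have htsum := tsum_mul_tsum_eq_tsum_sum_antidiagonal_of_summable_norm hf1 hf1
    have hts : HasSum (fun n : ℕ => ∑ kl ∈ Finset.HasAntidiagonal.antidiagonal n,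
        (a kl.1 * z ^ kl.1) * (a kl.2 * z ^ kl.2)) (w * w) := by
      have h2 := hsummable.hasSum
      rwa [← htsum, hw.tsum_eq] at h2
    have e : (fun n => PowerSeries.coeff n (A * A) * z ^ n)
        = fun n => ∑ kl ∈ Finset.HasAntidiagonal.antidiagonal n, (a kl.1 * z ^ kl.1) * (a kl.2 * z ^ kl.2) := by
      funext n
      rw [PowerSeries.coeff_mul, Finset.sum_mul]
      refine Finset.sum_congr rfl fun kl hkl => ?_
      have hn : kl.1 + kl.2 = n := Finset.HasAntidiagonal.mem_antidiagonal.mp hkl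
      rw [hcA, hcA, ← hn, pow_add]
      ring
    rw [e]
    exact hts
  have hprodnorm : Summable fun n => ‖PowerSeries.coeff n (A * A)‖ * ρ ^ n := by
    have hzρ : ‖((ρ : ℝ) : ℂ)‖ ≤ ρ := by
      rw [Complex.norm_real, Real.norm_eq_abs, abs_of_pos hρ0]
    have hf1 : Summable fun n => ‖a n * ((ρ : ℝ) : ℂ) ^ n‖ := habs _ hzρ
    have h2 := summable_norm_sum_mul_antidiagonal_of_summable_norm hf1 hf1
    have e : (fun n : ℕ => ‖∑ kl ∈ Finset.HasAntidiagonal.antidiagonal n,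
          (a kl.1 * ((ρ : ℝ) : ℂ) ^ kl.1) * (a kl.2 * ((ρ : ℝ) : ℂ) ^ kl.2)‖)
        = fun n => ‖PowerSeries.coeff n (A * A)‖ * ρ ^ n := by
      funext n
      have e2 : ∑ kl ∈ Finset.HasAntidiagonal.antidiagonal n,
          (a kl.1 * ((ρ : ℝ) : ℂ) ^ kl.1) * (a kl.2 * ((ρ : ℝ) : ℂ) ^ kl.2)
          = PowerSeries.coeff n (A * A) * ((ρ : ℝ) : ℂ) ^ n := by
        rw [PowerSeries.coeff_mul, Finset.sum_mul]
        refine Finset.sum_congr rfl fun kl hkl => ?_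
        have hn : kl.1 + kl.2 = n := Finset.HasAntidiagonal.mem_antidiagonal.mp hkl
        rw [hcA, hcA, ← hn, pow_add]
        ring
      rw [e2, norm_mul, norm_pow, Complex.norm_real, Real.norm_eq_abs, abs_of_pos hρ0]
    rwa [e] at h2
  -- the functional equation for A
  have heq : PowerSeries.X * A ^ 2 = (PowerSeries.X ^ 2 + PowerSeries.X - 1) * A + 1 := by
    have hA2 : A ^ 2 = A * A := sq A
    have hexp : (PowerSeries.X ^ 2 + PowerSeries.X - 1) * A + 1
        = PowerSeries.X * (PowerSeries.X * A) + PowerSeries.X * A - A + 1 := by ring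
    -- summability of the coefficients of both sides
    have sL : Summable fun n => ‖PowerSeries.coeff n (PowerSeries.X * (A * A))‖ * ρ ^ n := by
      have := summable_shift (g := fun n => ‖PowerSeries.coeff n (A * A)‖) hprodnorm
      refine this.congr fun n => ?_
      rw [coeff_X_mul']
      split <;> simp
    have sXA : Summable fun n => ‖PowerSeries.coeff n (PowerSeries.X * A)‖ * ρ ^ n := by
      have h0 : Summable fun n => ‖PowerSeries.coeff n A‖ * ρ ^ n := by
        refine hanorm.congr fun n => ?_
        rw [hcA]
      have := summable_shift (g := fun n => ‖PowerSeries.coeff n A‖) h0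
      refine this.congr fun n => ?_
      rw [coeff_X_mul']
      split <;> simp
    have sXXA : Summable fun n =>
        ‖PowerSeries.coeff n (PowerSeries.X * (PowerSeries.X * A))‖ * ρ ^ n := by
      have := summable_shift (g := fun n => ‖PowerSeries.coeff n (PowerSeries.X * A)‖) sXA
      refine this.congr fun n => ?_
      rw [coeff_X_mul' (PowerSeries.X * A)]
      split <;> simp
    have s1 : Summable fun n => ‖PowerSeries.coeff n (1 : PowerSeries ℂ)‖ * ρ ^ n := by
      have e : (fun n : ℕ => ‖PowerSeries.coeff n (1 : PowerSeries ℂ)‖ * ρ ^ n)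
          = fun n : ℕ => if n = 0 then 1 else 0 := by
        funext n
        rw [PowerSeries.coeff_one]
        split <;> simp [*]
      rw [e]
      exact (hasSum_ite_eq 0 (1:ℝ)).summable
    have sA : Summable fun n => ‖PowerSeries.coeff n A‖ * ρ ^ n := by
      refine hanorm.congr fun n => ?_
      rw [hcA]
    have sR : Summable fun n => ‖PowerSeries.coeff n
        ((PowerSeries.X ^ 2 + PowerSeries.X - 1) * A + 1)‖ * ρ ^ n := by
      have e : (fun n => ‖PowerSeries.coeff n
          ((PowerSeries.X ^ 2 + PowerSeries.X - 1) * A + 1)‖ * ρ ^ n)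
          = fun n => ‖PowerSeries.coeff n (PowerSeries.X * (PowerSeries.X * A))
              + PowerSeries.coeff n (PowerSeries.X * A) - PowerSeries.coeff n A
              + PowerSeries.coeff n (1 : PowerSeries ℂ)‖ * ρ ^ n := by
        funext n
        rw [hexp, map_add, map_sub, map_add]
      rw [e]
      exact summable_norm_add_mul_pow hρ0.le
        (summable_norm_sub_mul_pow hρ0.le (summable_norm_add_mul_pow hρ0.le sXXA sXA) sA) s1
    -- the sums of both sides agree on the small disk
    have hzero : ∀ z : ℂ, ‖z‖ < ρ →
        HasSum (fun n => (PowerSeries.coeff n (PowerSeries.X * (A * A))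
          - PowerSeries.coeff n ((PowerSeries.X ^ 2 + PowerSeries.X - 1) * A + 1)) * z ^ n)
          0 := by
      intro z hz
      have hzr : ‖z‖ < r := hz.trans hρr
      have hzR : ‖z‖ < Rstar := hzr.trans hrR
      have hbase : HasSum (fun n => a n * z ^ n) (Gc z) := hsum z hzr
      have hL : HasSum (fun n => PowerSeries.coeff n (PowerSeries.X * (A * A)) * z ^ n)
          (z * (Gc z * Gc z)) := by
        have h1 := hprodsum z hz.le _ hbase
        have h2 := hasSum_shift h1
        have e : (fun n => PowerSeries.coeff n (PowerSeries.X * (A * A)) * z ^ n)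
            = fun n => (if n = 0 then 0 else PowerSeries.coeff (n-1) (A * A)) * z ^ n := by
          funext n; rw [coeff_X_mul']
        rw [e]; exact h2
      have hbase' : HasSum (fun n => PowerSeries.coeff n A * z ^ n) (Gc z) := by
        have e : (fun n => PowerSeries.coeff n A * z ^ n) = fun n => a n * z ^ n := by
          funext n; rw [hcA]
        rw [e]; exact hbase
      have hXA : HasSum (fun n => PowerSeries.coeff n (PowerSeries.X * A) * z ^ n)
          (z * Gc z) := by
        have h2 := hasSum_shift hbase'
        have e : (fun n => PowerSeries.coeff n (PowerSeries.X * A) * z ^ n)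
            = fun n => (if n = 0 then 0 else PowerSeries.coeff (n-1) A) * z ^ n := by
          funext n; rw [coeff_X_mul']
        rw [e]; exact h2
      have hXXA : HasSum
          (fun n => PowerSeries.coeff n (PowerSeries.X * (PowerSeries.X * A)) * z ^ n)
          (z * (z * Gc z)) := by
        have h2 := hasSum_shift hXA
        have e : (fun n => PowerSeries.coeff n (PowerSeries.X * (PowerSeries.X * A)) * z ^ n)
            = fun n => (if n = 0 then 0 else PowerSeries.coeff (n-1) (PowerSeries.X * A))
              * z ^ n := by
          funext n; rw [coeff_X_mul']
        rw [e]; exact h2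
      have hone : HasSum (fun n => PowerSeries.coeff n (1 : PowerSeries ℂ) * z ^ n) 1 := by
        have e : (fun n => PowerSeries.coeff n (1 : PowerSeries ℂ) * z ^ n)
            = fun n : ℕ => if n = 0 then 1 else 0 := by
          funext n; rw [PowerSeries.coeff_one]; split <;> simp [*]
        rw [e]; exact hasSum_ite_eq 0 1
      have hRs : HasSum (fun n => PowerSeries.coeff n
          ((PowerSeries.X ^ 2 + PowerSeries.X - 1) * A + 1) * z ^ n)
          (z * (z * Gc z) + z * Gc z - Gc z + 1) := by
        have hcomb := ((hXXA.add hXA).sub hbase').add hone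
        have e : (fun n => PowerSeries.coeff n
            ((PowerSeries.X ^ 2 + PowerSeries.X - 1) * A + 1) * z ^ n)
            = fun n => (PowerSeries.coeff n (PowerSeries.X * (PowerSeries.X * A)) * z ^ n
              + PowerSeries.coeff n (PowerSeries.X * A) * z ^ n
              - PowerSeries.coeff n A * z ^ n)
              + PowerSeries.coeff n (1 : PowerSeries ℂ) * z ^ n := by
          funext n
          rw [hexp, map_add, map_sub, map_add]
          ring
        rw [e]; exact hcomb
      have hfinal := hL.sub hRs
      have hv : z * (Gc z * Gc z) - (z * (z * Gc z) + z * Gc z - Gc z + 1) = 0 := by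
        have hqz := Gc_quadratic hzR
        linear_combination hqz
      rw [hv] at hfinal
      have e : (fun n => (PowerSeries.coeff n (PowerSeries.X * (A * A))
          - PowerSeries.coeff n ((PowerSeries.X ^ 2 + PowerSeries.X - 1) * A + 1)) * z ^ n)
          = fun n => PowerSeries.coeff n (PowerSeries.X * (A * A)) * z ^ n
            - PowerSeries.coeff n ((PowerSeries.X ^ 2 + PowerSeries.X - 1) * A + 1) * z ^ n := by
        funext n; ring
      rw [e]; exact hfinal
    have main := coeff_eq_zero_of_hasSum_zero hρ0
      (summable_norm_sub_mul_pow hρ0.le sL sR) hzero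
    rw [hA2]
    apply PowerSeries.ext
    intro n
    exact sub_eq_zero.mp (main n)
  -- complexify f and identify the coefficients
  have hmap : PowerSeries.X * (PowerSeries.map (algebraMap ℝ ℂ) f) ^ 2
      = (PowerSeries.X ^ 2 + PowerSeries.X - 1) * (PowerSeries.map (algebraMap ℝ ℂ) f) + 1 := by
    have h := congrArg (PowerSeries.map (algebraMap ℝ ℂ)) hf
    simpa [map_mul, map_add, map_sub, map_pow, map_one, PowerSeries.map_X] using h
  have hfA : PowerSeries.map (algebraMap ℝ ℂ) f = A :=
    powerSeries_quadratic_unique _ _ hmap heq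
  have hka : ∀ n, ((PowerSeries.coeff n f : ℝ) : ℂ) = a n := by
    intro n
    have h := congrArg (PowerSeries.coeff n) hfA
    rw [PowerSeries.coeff_map, hcA] at h
    simpa using h
  have hq' : ‖((q : ℝ) : ℂ)‖ < r := by
    rw [Complex.norm_real, Real.norm_eq_abs, abs_of_pos hq0]; exact hqr
  have hs := hsum ((q : ℝ) : ℂ) hq'
  rw [Gc_real hq0 hqR] at hs
  have e : (fun n => a n * ((q : ℝ) : ℂ) ^ n)
      = fun n => ((PowerSeries.coeff n f * q ^ n : ℝ) : ℂ) := by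
    funext n
    rw [← hka n]
    push_cast
    ring
  rw [e] at hs
  exact Complex.hasSum_ofReal.mp hs
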